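/- Let k be an integer with 1 ≤ k ≤ n and gcd(k,n) ≠ 1. If gcd(k,M) = 1 and M ≠ n, then the unit u_k = a^k + (a-1)bâ has finite order exactly n/gcd(k,n) in U(𝕂G). -/

import Mathlib

open Finset

lemma aux_sum_range_natCast {R : Type*} [AddCommMonoid R] (M : ℕ) [NeZero M] (F : ZMod M → R) :
    ∑ i ∈ Finset.range M, F (i : ZMod M) = ∑ x : ZMod M, F x := by
  refine Finset.sum_nbij' (fun i => (i : ZMod M)) (fun x => x.val) (fun i _ => Finset.mem_univ _)
    (fun x _ => Finset.mem_range.2 (ZMod.val_lt x)) ?_ ?_ (fun i _ => rfl)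
  · intro i hi
    simp [ZMod.val_natCast, Nat.mod_eq_of_lt (Finset.mem_range.1 hi)]
  · intro x _
    simp [ZMod.natCast_val, ZMod.cast_id]

lemma aux_sum_affine {R : Type*} [AddCommMonoid R] (M : ℕ) [NeZero M] (F : ZMod M → R)
    (k c : ℕ) (hk : Nat.Coprime k M) :
    ∑ x : ZMod M, F ((k : ZMod M) * x + c) = ∑ x : ZMod M, F x := by
  apply Fintype.sum_bijective (fun x : ZMod M => (k : ZMod M) * x + (c : ZMod M))
  · have h1 : Function.Bijective (fun x : ZMod M => (ZMod.unitOfCoprime k hk : ZMod M) * x) :=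
      (ZMod.unitOfCoprime k hk).mulLeft_bijective
    have h2 : Function.Bijective (fun x : ZMod M => x + (c : ZMod M)) :=
      (Equiv.addRight (c : ZMod M)).bijective
    have := h2.comp h1
    simpa [Function.comp, ZMod.coe_unitOfCoprime] using this
  · intro x; rfl

lemma aux_sum_mod_eq {R : Type*} [AddCommMonoid R] (M : ℕ) [NeZero M] (f : ℕ → R)
    (k c : ℕ) (hk : Nat.Coprime k M) :
    ∑ i ∈ Finset.range M, f ((k * i + c) % M) = ∑ r ∈ Finset.range M, f r := by
  have key : ∀ i : ℕ, f ((k * i + c) % M) = (fun x : ZMod M => f x.val) ((k : ZMod M) * (i : ZMod M) + (c : ZMod M)) := by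
    intro i
    have : ((k : ZMod M) * (i : ZMod M) + (c : ZMod M)) = ((k * i + c : ℕ) : ZMod M) := by push_cast; ring
    rw [this]
    simp only [ZMod.val_natCast]
  calc ∑ i ∈ Finset.range M, f ((k * i + c) % M)
      = ∑ i ∈ Finset.range M, (fun x : ZMod M => f x.val) ((k : ZMod M) * (i : ZMod M) + (c : ZMod M)) := by
        exact Finset.sum_congr rfl fun i _ => key i
    _ = ∑ x : ZMod M, (fun x : ZMod M => f x.val) ((k : ZMod M) * x + (c : ZMod M)) :=
        aux_sum_range_natCast M (fun x => f ((k : ZMod M) * x + (c : ZMod M)).val)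
    _ = ∑ x : ZMod M, f x.val := aux_sum_affine M (fun x => f x.val) k c hk
    _ = ∑ r ∈ Finset.range M, f ((r : ZMod M)).val := (aux_sum_range_natCast M (fun x => f x.val)).symm
    _ = ∑ r ∈ Finset.range M, f r := by
        refine Finset.sum_congr rfl fun r hr => ?_
        rw [ZMod.val_natCast, Nat.mod_eq_of_lt (Finset.mem_range.1 hr)]

lemma aux_sum_period {R : Type*} [AddCommMonoid R] (M : ℕ) [NeZero M] (f : ℕ → R)
    (k c : ℕ) (hk : Nat.Coprime k M) (q : ℕ) :
    ∑ i ∈ Finset.range (M * q), f ((k * i + c) % M) = q • ∑ r ∈ Finset.range M, f r := by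
  induction q with
  | zero => simp
  | succ q ih =>
    have : M * (q + 1) = M * q + M := by ring
    rw [this, Finset.sum_range_add, ih, succ_nsmul]
    congr 1
    have : ∀ i, (k * (M * q + i) + c) % M = (k * i + c) % M := by
      intro i
      have h : k * (M * q + i) + c = M * (k * q) + (k * i + c) := by ring
      rw [h, Nat.mul_add_mod]
    rw [Finset.sum_congr rfl fun i _ => by rw [this i]]
    exact aux_sum_mod_eq M f k c hk

theorem stmt_10 {𝕂 : Type*} [CommRing 𝕂] [IsDomain 𝕂]
    {G : Type*} [Group G] (a b : G) (n : ℕ) (hn : 2 ≤ n) (ha : orderOf a = n)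
    (hA : ¬ (Subgroup.zpowers a).Normal)
    (hb : b ∉ Subgroup.normalizer (Subgroup.zpowers a))
    (ahat : MonoidAlgebra 𝕂 G)
    (hahat : ahat = ∑ i ∈ Finset.range n, (MonoidAlgebra.of 𝕂 G a) ^ i)
    (M : ℕ) (hM2 : 2 ≤ M) (hMn : M ≤ n)
    (hMmem : b ∈ Subgroup.normalizer (Subgroup.zpowers (a ^ M)))
    (hMmin : ∀ m : ℕ, 2 ≤ m → m < M → b ∉ Subgroup.normalizer (Subgroup.zpowers (a ^ m)))
    (k : ℕ) (hk1 : 1 ≤ k) (hkn : k ≤ n) (hgcd : Nat.gcd k n ≠ 1)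
    (hkM : Nat.gcd k M = 1) (hMne : M ≠ n)
    (u : (MonoidAlgebra 𝕂 G)ˣ)
    (hu : (u : MonoidAlgebra 𝕂 G) = MonoidAlgebra.of 𝕂 G a ^ k + (MonoidAlgebra.of 𝕂 G a - 1) * MonoidAlgebra.of 𝕂 G b * ahat) :
    orderOf u = n / Nat.gcd k n := by
  have hn0 : 0 < n := by omega
  haveI : NeZero M := ⟨by omega⟩
  set A : MonoidAlgebra 𝕂 G := MonoidAlgebra.of 𝕂 G a with hAdef
  set B : MonoidAlgebra 𝕂 G := MonoidAlgebra.of 𝕂 G b with hBdef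
  have haN : a ^ n = 1 := by rw [← ha]; exact pow_orderOf_eq_one a
  have hApow : ∀ i : ℕ, A ^ i = MonoidAlgebra.of 𝕂 G (a ^ i) := fun i => (map_pow _ a i).symm
  have hAn : A ^ n = 1 := by rw [hApow, haN, map_one]
  -- a * ahat = ahat
  have hmul1 : A * ahat = ahat := by
    rw [hahat, Finset.mul_sum]
    have e0 : ∀ i ∈ Finset.range n, A * A ^ i = A ^ (i + 1) := by
      intro i _; exact (pow_succ' A i).symm
    rw [Finset.sum_congr rfl e0]
    have e1 : ∑ i ∈ Finset.range (n + 1), A ^ i = (∑ i ∈ Finset.range n, A ^ (i + 1)) + A ^ 0 :=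
      Finset.sum_range_succ' _ n
    have e2 : ∑ i ∈ Finset.range (n + 1), A ^ i = (∑ i ∈ Finset.range n, A ^ i) + A ^ n :=
      Finset.sum_range_succ _ n
    rw [hAn] at e2
    rw [pow_zero] at e1
    exact add_right_cancel (e1.symm.trans e2)
  have hmulpow : ∀ j : ℕ, A ^ j * ahat = ahat := by
    intro j
    induction j with
    | zero => simp
    | succ j ih => rw [pow_succ', mul_assoc, ih, hmul1]
  have hahatA : ∀ j : ℕ, ahat * A ^ j = ahat := by
    intro j
    have hc : ahat * A ^ j = A ^ j * ahat := by
      rw [hahat, Finset.sum_mul, Finset.mul_sum]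
      exact Finset.sum_congr rfl fun i _ => pow_mul_comm A i j
    rw [hc, hmulpow]
  have hahatsub : ahat * (A - 1) = 0 := by
    have := hahatA 1
    rw [pow_one] at this
    rw [mul_sub, mul_one, this, sub_self]
  -- zpow version
  have hzpow : ∀ z : ℤ, MonoidAlgebra.of 𝕂 G (a ^ z) * ahat = ahat := by
    intro z
    have hz : a ^ z = a ^ (z % (n : ℤ)).toNat := by
      conv_lhs => rw [← Int.emod_add_mul_ediv z (n : ℤ)]
      rw [zpow_add, zpow_mul, zpow_natCast, haN, one_zpow, mul_one,
        ← zpow_natCast, Int.toNat_of_nonneg (Int.emod_nonneg z (by exact_mod_cast hn0.ne'))]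
    rw [hz, ← hApow, hmulpow]
  -- b normalizes <a^M>, so A^M shifts through B * ahat
  have hconj : ∃ z : ℤ, b⁻¹ * a ^ M * b = (a ^ M) ^ z := by
    have hinv : b⁻¹ ∈ Subgroup.normalizer (Subgroup.zpowers (a ^ M)) :=
      Subgroup.inv_mem _ hMmem
    have := (Subgroup.mem_normalizer_iff.mp hinv (a ^ M)).mp
      (Subgroup.mem_zpowers (a ^ M))
    rw [inv_inv] at this
    obtain ⟨z, hz⟩ := this
    exact ⟨z, hz.symm⟩
  have hMshift : A ^ M * (B * ahat) = B * ahat := by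
    obtain ⟨z, hz⟩ := hconj
    have hg : a ^ M * b = b * a ^ ((M : ℤ) * z) := by
      have : a ^ M * b = b * (b⁻¹ * a ^ M * b) := by group
      rw [this, hz, ← zpow_natCast a M, ← zpow_mul]
    calc A ^ M * (B * ahat) = MonoidAlgebra.of 𝕂 G (a ^ M * b) * ahat := by
          rw [hApow, hBdef, ← mul_assoc, ← map_mul]
      _ = B * (MonoidAlgebra.of 𝕂 G (a ^ ((M : ℤ) * z)) * ahat) := by
          rw [hg, map_mul, mul_assoc, hBdef]
      _ = B * ahat := by rw [hzpow]
  have hMshiftpow : ∀ j : ℕ, (A ^ M) ^ j * (B * ahat) = B * ahat := by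
    intro j
    induction j with
    | zero => simp
    | succ j ih => rw [pow_succ', mul_assoc, ih, hMshift]
  have hmod : ∀ s : ℕ, A ^ s * (B * ahat) = A ^ (s % M) * (B * ahat) := by
    intro s
    conv_lhs => rw [← Nat.mod_add_div s M]
    rw [pow_add, mul_assoc, pow_mul, hMshiftpow]
  -- M divides n
  have hMdvdn : M ∣ n := by
    set g := Nat.gcd M n with hgdef
    have hgM : g ∣ M := Nat.gcd_dvd_left M n
    have hgn : g ∣ n := Nat.gcd_dvd_right M n
    have hgpos : 0 < g := Nat.gcd_pos_of_pos_left n (by omega)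
    have hsub : Subgroup.zpowers (a ^ g) = Subgroup.zpowers (a ^ M) := by
      apply le_antisymm
      · rw [Subgroup.zpowers_le]
        have hbez : (g : ℤ) = M * Nat.gcdA M n + n * Nat.gcdB M n := Nat.gcd_eq_gcd_ab M n
        have : a ^ (g : ℤ) = (a ^ M) ^ (Nat.gcdA M n) := by
          rw [hbez, zpow_add, zpow_mul, zpow_mul, zpow_natCast, zpow_natCast, haN,
            one_zpow, mul_one]
        rw [← zpow_natCast a g, this]
        exact Subgroup.zpow_mem (Subgroup.zpowers (a ^ M)) (Subgroup.mem_zpowers _) _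
      · rw [Subgroup.zpowers_le]
        have : a ^ M = (a ^ g) ^ (M / g) := by
          rw [← pow_mul, Nat.mul_div_cancel' hgM]
        rw [this]
        exact Subgroup.pow_mem _ (Subgroup.mem_zpowers _) _
    have hbg : b ∈ Subgroup.normalizer (Subgroup.zpowers (a ^ g)) := by
      rw [hsub]; exact hMmem
    have hgM' : g = M := by
      by_contra hne
      have hlt : g < M := lt_of_le_of_ne (Nat.le_of_dvd (by omega) hgM) hne
      rcases Nat.lt_or_ge g 2 with h2 | h2
      · have hg1 : g = 1 := by omega
        rw [hg1, pow_one] at hbg; exact hb hbg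
      · exact hMmin g h2 hlt hbg
    rw [← hgM']; exact hgn
  -- arithmetic setup
  set d := Nat.gcd k n with hddef
  set N := n / d with hNdef
  have hdpos : 0 < d := Nat.gcd_pos_of_pos_right k hn0
  have hdk : d ∣ k := Nat.gcd_dvd_left k n
  have hdn : d ∣ n := Nat.gcd_dvd_right k n
  have hdN : d * N = n := Nat.mul_div_cancel' hdn
  have hNpos : 0 < N := Nat.div_pos (Nat.le_of_dvd hn0 hdn) hdpos
  have hkMcop : Nat.Coprime k M := hkM
  have hdMcop : Nat.Coprime d M := Nat.Coprime.coprime_dvd_left hdk hkMcop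
  have hMdvdN : M ∣ N := by
    have : M ∣ d * N := by rw [hdN]; exact hMdvdn
    exact (Nat.Coprime.dvd_of_dvd_mul_left hdMcop.symm this)
  -- power formula
  set D : MonoidAlgebra 𝕂 G := (A - 1) * (B * ahat) with hDdef
  have huD : (u : MonoidAlgebra 𝕂 G) = A ^ k + D := by rw [hu, hDdef, mul_assoc]
  have hDA : ∀ j : ℕ, D * A ^ j = D := by
    intro j
    rw [hDdef, mul_assoc, mul_assoc, hahatA]
  have hDD : D * D = 0 := by
    rw [hDdef]
    have : B * ahat * ((A - 1) * (B * ahat)) = B * (ahat * (A - 1)) * (B * ahat) := by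
      noncomm_ring
    rw [mul_assoc (A - 1), this, hahatsub, mul_zero, zero_mul, mul_zero]
  have hpow : ∀ m : ℕ, ((u ^ m : (MonoidAlgebra 𝕂 G)ˣ) : MonoidAlgebra 𝕂 G)
      = A ^ (k * m) + (∑ i ∈ Finset.range m, A ^ (k * i)) * D := by
    intro m
    induction m with
    | zero => simp
    | succ m ih =>
      rw [pow_succ, Units.val_mul, ih, huD]
      rw [add_mul, mul_add, mul_add, ← pow_add, mul_assoc, hDA k, mul_assoc, hDD, mul_zero,
        add_zero, Finset.sum_range_succ, add_mul]
      ring_nf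
      rw [add_assoc, add_comm (A ^ (k * m) * D)]
  -- u ^ N = 1
  have hNM : N = M * (N / M) := (Nat.mul_div_cancel' hMdvdN).symm
  have hSN : (∑ i ∈ Finset.range N, A ^ (k * i)) * D = 0 := by
    rw [Finset.sum_mul]
    have term : ∀ i : ℕ, A ^ (k * i) * D
        = A ^ ((k * i + 1) % M) * (B * ahat) - A ^ ((k * i + 0) % M) * (B * ahat) := by
      intro i
      rw [hDdef, ← mul_assoc, mul_sub, mul_one, ← pow_succ, sub_mul, hmod (k * i + 1),
        hmod (k * i)]
      rw [add_zero]
    rw [Finset.sum_congr rfl fun i _ => term i, Finset.sum_sub_distrib, hNM,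
      aux_sum_period M (fun t => A ^ t * (B * ahat)) k 1 hkMcop,
      aux_sum_period M (fun t => A ^ t * (B * ahat)) k 0 hkMcop, sub_self]
  have hAkN : A ^ (k * N) = 1 := by
    have hkN : k * N = (k / d) * n := by
      calc k * N = ((k / d) * d) * N := by rw [Nat.div_mul_cancel hdk]
        _ = (k / d) * n := by rw [mul_assoc, hdN]
    rw [hkN, mul_comm, pow_mul, hAn, one_pow]
  have hUN : u ^ N = 1 := by
    apply Units.ext
    rw [hpow N, hSN, add_zero, hAkN, Units.val_one]
  have hord1 : orderOf u ∣ N := orderOf_dvd_of_pow_eq_one hUN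
  -- the group-element separation fact
  have hbne : ∀ s j t : ℕ, a ^ s * b * a ^ j ≠ a ^ t := by
    intro s j t h
    apply hb
    apply Subgroup.le_normalizer
    have hbeq : b = (a ^ s)⁻¹ * a ^ t * (a ^ j)⁻¹ := by rw [← h]; group
    rw [hbeq]
    exact mul_mem (mul_mem (inv_mem (Subgroup.pow_mem _ (Subgroup.mem_zpowers a) s))
      (Subgroup.pow_mem _ (Subgroup.mem_zpowers a) t))
      (inv_mem (Subgroup.pow_mem _ (Subgroup.mem_zpowers a) j))
  -- expansion of the error term as singles
  have hsingle : ∀ s j : ℕ, A ^ s * (B * A ^ j) = MonoidAlgebra.single (a ^ s * b * a ^ j) (1 : 𝕂) := by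
    intro s j
    rw [hApow, hApow, hBdef, ← map_mul, ← map_mul, ← mul_assoc]
    rfl
  have hBahat : B * ahat = ∑ j ∈ Finset.range n, B * A ^ j := by
    rw [hahat, Finset.mul_sum]
  have hexp : ∀ m : ℕ, (∑ i ∈ Finset.range m, A ^ (k * i)) * D
      = ∑ i ∈ Finset.range m, ∑ j ∈ Finset.range n,
          (MonoidAlgebra.single (a ^ (k * i + 1) * b * a ^ j) (1 : 𝕂)
            - MonoidAlgebra.single (a ^ (k * i) * b * a ^ j) (1 : 𝕂)) := by
    intro m
    rw [Finset.sum_mul]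
    refine Finset.sum_congr rfl fun i _ => ?_
    rw [hDdef, ← mul_assoc, mul_sub, mul_one, ← pow_succ, sub_mul, hBahat,
      Finset.mul_sum, Finset.mul_sum, ← Finset.sum_sub_distrib]
    refine Finset.sum_congr rfl fun j _ => ?_
    rw [hsingle, hsingle]
  -- a ^ (k * orderOf u) = 1
  set m := orderOf u with hmdef
  have hum : u ^ m = 1 := pow_orderOf_eq_one u
  have hAkm : a ^ (k * m) = 1 := by
    by_contra hne
    have heq : A ^ (k * m) + (∑ i ∈ Finset.range m, A ^ (k * i)) * D = 1 := by
      rw [← hpow m, hum, Units.val_one]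
    rw [hexp m] at heq
    have := congrArg (fun f : MonoidAlgebra 𝕂 G => f.coeff (a ^ (k * m))) heq
    rw [MonoidAlgebra.coeff_add, Finsupp.add_apply] at this
    have e1 : (A ^ (k * m)).coeff (a ^ (k * m)) = 1 := by
      rw [hApow]; simp
    have e2 : (∑ i ∈ Finset.range m, ∑ j ∈ Finset.range n,
          (MonoidAlgebra.single (a ^ (k * i + 1) * b * a ^ j) (1 : 𝕂)
            - MonoidAlgebra.single (a ^ (k * i) * b * a ^ j) (1 : 𝕂))).coeff (a ^ (k * m)) = 0 := by
      rw [MonoidAlgebra.coeff_sum, Finset.sum_apply']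
      refine Finset.sum_eq_zero fun i _ => ?_
      rw [MonoidAlgebra.coeff_sum, Finset.sum_apply']
      refine Finset.sum_eq_zero fun j _ => ?_
      rw [MonoidAlgebra.coeff_sub, Finsupp.sub_apply, MonoidAlgebra.coeff_single, MonoidAlgebra.coeff_single,
        Finsupp.single_eq_of_ne' (hbne _ _ _), Finsupp.single_eq_of_ne' (hbne _ _ _), sub_zero]
    have e3 : (1 : MonoidAlgebra 𝕂 G).coeff (a ^ (k * m)) = 0 := by
      rw [MonoidAlgebra.one_def, MonoidAlgebra.coeff_single]
      exact Finsupp.single_eq_of_ne' fun h => hne h.symm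
    rw [e1, e2, e3, add_zero] at this
    exact one_ne_zero this
  have hndvd : n ∣ k * m := by
    rw [← ha]
    exact orderOf_dvd_of_pow_eq_one hAkm
  have hcop : Nat.Coprime (k / d) (n / d) := Nat.coprime_div_gcd_div_gcd hdpos
  have hNm : N ∣ m := by
    have h1 : d * N ∣ d * ((k / d) * m) := by
      rw [hdN, ← mul_assoc, Nat.mul_div_cancel' hdk]
      exact hndvd
    have h2 : N ∣ (k / d) * m := (Nat.mul_dvd_mul_iff_left hdpos).mp h1
    exact Nat.Coprime.dvd_of_dvd_mul_left hcop.symm h2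
  exact Nat.dvd_antisymm hord1 hNm
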